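/- Let X be a real normed linear space, x₁,…,xₙ nonzero vectors, pⱼ ≥ 0 with Σpⱼ = 1, and x̄ := Σⱼ pⱼ•xⱼ ≠ 0. If there exists R with 0 < R < 1 such that ⟨xⱼ, x̄⟩_s ≤ R·‖xⱼ‖·‖x̄‖ for each j, then R·Σⱼ pⱼ‖xⱼ‖ ≥ ‖Σⱼ pⱼ•xⱼ‖. -/

import Mathlib

noncomputable def innerSup {X : Type*} [NormedAddCommGroup X] [NormedSpace ℝ X] (x a : X) : ℝ :=
  sInf ((fun t : ℝ => (‖a + t • x‖ ^ 2 - ‖a‖ ^ 2) / (2 * t)) '' Set.Ioi 0)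

/-- Monotonicity of the slope of the norm along a line. -/
lemma norm_slope_mono {X : Type*} [NormedAddCommGroup X] [NormedSpace ℝ X]
    (a x : X) {t s : ℝ} (ht : 0 < t) (hts : t ≤ s) :
    (‖a + t • x‖ - ‖a‖) / t ≤ (‖a + s • x‖ - ‖a‖) / s := by
  have hs : 0 < s := lt_of_lt_of_le ht hts
  have hkey : a + t • x = (1 - t / s) • a + (t / s) • (a + s • x) := by
    rw [smul_add, smul_smul]
    have : t / s * s = t := div_mul_cancel₀ t hs.ne'
    rw [this, sub_smul, one_smul]
    abel
  have hb : ‖a + t • x‖ ≤ (1 - t / s) * ‖a‖ + (t / s) * ‖a + s • x‖ := by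
    rw [hkey]
    refine (norm_add_le _ _).trans ?_
    rw [norm_smul, norm_smul, Real.norm_eq_abs, Real.norm_eq_abs,
      abs_of_nonneg (by positivity : (0:ℝ) ≤ t / s),
      abs_of_nonneg (by nlinarith [div_le_one_of_le₀ hts hs.le] : (0:ℝ) ≤ 1 - t / s)]
  rw [div_le_div_iff₀ ht hs]
  have hb' : s * ‖a + t • x‖ ≤ (s - t) * ‖a‖ + t * ‖a + s • x‖ := by
    have h3 : s * ((1 - t / s) * ‖a‖ + t / s * ‖a + s • x‖)
        = (s - t) * ‖a‖ + t * ‖a + s • x‖ := by field_simp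
    calc s * ‖a + t • x‖ ≤ s * ((1 - t / s) * ‖a‖ + t / s * ‖a + s • x‖) :=
          mul_le_mul_of_nonneg_left hb hs.le
      _ = (s - t) * ‖a‖ + t * ‖a + s • x‖ := h3
  linarith

theorem stmt19 {X : Type*} [NormedAddCommGroup X] [NormedSpace ℝ X]
    (n : ℕ) (x : Fin n → X) (hx0 : ∀ j, x j ≠ 0)
    (p : Fin n → ℝ) (hp : ∀ j, 0 ≤ p j) (hp1 : ∑ j, p j = 1)
    (hbar : (∑ j, p j • x j) ≠ 0)
    (R : ℝ) (hR0 : 0 < R) (hR1 : R < 1)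
    (h : ∀ j, innerSup (x j) (∑ i, p i • x i) ≤ R * ‖x j‖ * ‖∑ i, p i • x i‖) :
    R * ∑ j, p j * ‖x j‖ ≥ ‖∑ j, p j • x j‖ := by
  set a := ∑ i, p i • x i with ha
  have hA : 0 < ‖a‖ := norm_pos_iff.mpr hbar
  set A := ‖a‖ with hAdef
  -- n must be positive
  have hne : Nonempty (Fin n) := by
    rcases Nat.eq_zero_or_pos n with h0 | h0
    · exfalso; apply hbar; subst h0; simp [ha]
    · exact ⟨⟨0, h0⟩⟩
  rw [ge_iff_le]
  have key : A * A ≤ (R * ∑ j, p j * ‖x j‖) * A := by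
    apply le_of_forall_pos_le_add
    intro ε hε
    -- choose t j witnesses
    have hchoice : ∀ j : Fin n, ∃ tj : ℝ, 0 < tj ∧
        (‖a + tj • x j‖ ^ 2 - A ^ 2) / (2 * tj) < R * ‖x j‖ * A + ε := by
      intro j
      have hlt : sInf ((fun t : ℝ => (‖a + t • x j‖ ^ 2 - ‖a‖ ^ 2) / (2 * t)) '' Set.Ioi 0)
          < R * ‖x j‖ * A + ε := lt_of_le_of_lt (h j) (by linarith)
      obtain ⟨c, ⟨tj, htj, rfl⟩, hc⟩ := exists_lt_of_csInf_lt
        (Set.Nonempty.image _ ⟨1, by norm_num⟩) hlt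
      exact ⟨tj, htj, hc⟩
    choose t ht hq using hchoice
    set T : ℝ := Finset.univ.inf' (Finset.univ_nonempty) t with hT
    have hT0 : 0 < T := by
      rw [hT]
      exact (Finset.lt_inf'_iff _).mpr (fun j _ => ht j)
    have hTle : ∀ j, T ≤ t j := fun j => Finset.inf'_le _ (Finset.mem_univ j)
    -- each term bound
    have step : ∀ j, A * ((‖a + T • x j‖ - A) / T) ≤ R * ‖x j‖ * A + ε := by
      intro j
      have h1 : (‖a + T • x j‖ - A) / T ≤ (‖a + t j • x j‖ - A) / (t j) :=
        norm_slope_mono a (x j) hT0 (hTle j)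
      have h2 : A * ((‖a + t j • x j‖ - A) / (t j)) ≤
          (‖a + t j • x j‖ ^ 2 - A ^ 2) / (2 * t j) := by
        rw [← mul_div_assoc, div_le_div_iff₀ (ht j) (by linarith [ht j])]
        nlinarith [mul_nonneg (sq_nonneg (‖a + t j • x j‖ - A)) (ht j).le]
      calc A * ((‖a + T • x j‖ - A) / T) ≤ A * ((‖a + t j • x j‖ - A) / (t j)) := by
            exact mul_le_mul_of_nonneg_left h1 hA.le
        _ ≤ (‖a + t j • x j‖ ^ 2 - A ^ 2) / (2 * t j) := h2
        _ ≤ R * ‖x j‖ * A + ε := (hq j).le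
    -- convexity combination
    have hcomb : (1 + T) * A ≤ ∑ j, p j * ‖a + T • x j‖ := by
      have heq : ∑ j, p j • (a + T • x j) = (1 + T) • a := by
        have : ∀ j, p j • (a + T • x j) = p j • a + T • (p j • x j) := by
          intro j; rw [smul_add, smul_comm]
        simp_rw [this, Finset.sum_add_distrib, ← Finset.smul_sum, ← Finset.sum_smul, hp1,
          one_smul, add_smul, one_smul]
        rw [← ha]
      have := norm_sum_le Finset.univ (fun j => p j • (a + T • x j))
      rw [heq, norm_smul, Real.norm_eq_abs, abs_of_pos (by linarith : (0:ℝ) < 1 + T)] at this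
      refine this.trans (le_of_eq (Finset.sum_congr rfl fun j _ => ?_))
      rw [norm_smul, Real.norm_eq_abs, abs_of_nonneg (hp j)]
    -- combine
    have hmain : A * A ≤ ∑ j, p j * (A * ((‖a + T • x j‖ - A) / T)) := by
      have hterm : ∀ j, p j * (A * ((‖a + T • x j‖ - A) / T)) =
          (A * (p j * ‖a + T • x j‖) - (A * A) * p j) / T := by
        intro j; field_simp
      simp_rw [hterm]
      rw [← Finset.sum_div, Finset.sum_sub_distrib, ← Finset.mul_sum, ← Finset.mul_sum, hp1,
        mul_one, le_div_iff₀ hT0]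
      nlinarith [hcomb, hA]
    calc A * A ≤ ∑ j, p j * (A * ((‖a + T • x j‖ - A) / T)) := hmain
      _ ≤ ∑ j, p j * (R * ‖x j‖ * A + ε) :=
          Finset.sum_le_sum fun j _ => mul_le_mul_of_nonneg_left (step j) (hp j)
      _ = (R * ∑ j, p j * ‖x j‖) * A + ε := by
          simp_rw [mul_add, Finset.sum_add_distrib, ← Finset.sum_mul, hp1, one_mul,
            Finset.mul_sum, Finset.sum_mul]
          congr 1
          exact Finset.sum_congr rfl fun j _ => by ring
  exact le_of_mul_le_mul_right (by linarith [key]) hA
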